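/- For all real numbers a, b with a² + b² ≤ 1 and (a,b) ≠ (1,0), the function F(a,b) = (a((1-a)² + b²) - b²) / ((1-a)² + b²)² satisfies F(a,b) ≥ -1/4. -/
import Mathlib

theorem stmt_0 (a b : ℝ) (h : a^2 + b^2 ≤ 1) (hne : (a, b) ≠ (1, 0)) :
    (a * ((1-a)^2 + b^2) - b^2) / ((1-a)^2 + b^2)^2 ≥ -1/4 := by
  have hD : (1-a)^2 + b^2 > 0 := by
    rcases lt_or_eq_of_le (by positivity : (0:ℝ) ≤ (1-a)^2 + b^2) with h'|h'
    · exact h'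
    · exfalso; apply hne
      have h1 : (1-a)^2 = 0 := by nlinarith [sq_nonneg (1-a), sq_nonneg b]
      have h2 : b^2 = 0 := by nlinarith [sq_nonneg (1-a), sq_nonneg b]
      have ha1 : a = 1 := by nlinarith [pow_eq_zero_iff (n:=2) (by norm_num) |>.mp h1]
      have hb0 : b = 0 := pow_eq_zero_iff (n:=2) (by norm_num) |>.mp h2
      exact Prod.ext ha1 hb0
  rw [ge_iff_le, le_div_iff₀ (by positivity)]
  nlinarith [sq_nonneg (1-a), sq_nonneg b, sq_nonneg (a+b^2), sq_nonneg ((1-a)^2+b^2-2), sq_nonneg (a*((1-a)^2+b^2)), mul_pos hD hD, sq_nonneg (((1-a)^2+b^2)/2 + a - 1), sq_nonneg (((1-a)^2+b^2) + 2*a)]
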